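/- For 0 < α < 1/2, the function h(c) = 2c / (1 - α(4/(1-1/c) - 2)), defined for c > 1 with positive denominator, attains its minimum at c* = (2√(2α² + α) + 2α + 1)/(1 - 2α), and the minimum value equals 2(2α + √(α(1+2α)))·(1 + 2α + 2√(α(1+2α))) / ((1-2α)²·√(α(1+2α))). -/

import Mathlib

/-- For `0 < α < 1/2`, the function `h(c) = 2c/(1 - α(4/(1-1/c) - 2))` on the domain
`c > 1` with positive denominator attains its minimum at
`c* = (2√(2α²+α) + 2α + 1)/(1-2α)`, with minimum value
`2(2α + √(α(1+2α)))(1 + 2α + 2√(α(1+2α)))/((1-2α)²√(α(1+2α)))`. -/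
theorem stmt5 (α : ℝ) (hα : 0 < α) (hα2 : α < 1 / 2) :
    let cstar := (2 * Real.sqrt (2 * α ^ 2 + α) + 2 * α + 1) / (1 - 2 * α)
    let h := fun c : ℝ => 2 * c / (1 - α * (4 / (1 - 1 / c) - 2))
    (1 < cstar ∧ 0 < 1 - α * (4 / (1 - 1 / cstar) - 2)) ∧
    (∀ c : ℝ, 1 < c → 0 < 1 - α * (4 / (1 - 1 / c) - 2) → h cstar ≤ h c) ∧
    h cstar = 2 * (2 * α + Real.sqrt (α * (1 + 2 * α))) *
        (1 + 2 * α + 2 * Real.sqrt (α * (1 + 2 * α))) /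
        ((1 - 2 * α) ^ 2 * Real.sqrt (α * (1 + 2 * α))) := by
  have ha : (0:ℝ) < 1 - 2*α := by linarith
  have ha' : (1:ℝ) - 2*α ≠ 0 := ne_of_gt ha
  have hsnn : (0:ℝ) ≤ α * (1 + 2*α) := by positivity
  set s := Real.sqrt (α * (1 + 2*α)) with hs
  have hsq : s^2 = α * (1 + 2*α) := Real.sq_sqrt hsnn
  have hs0 : 0 < s := Real.sqrt_pos.2 (by positivity)
  intro cstar h
  have hcstar : cstar = (2*s + 2*α + 1)/(1 - 2*α) := by
    show (2 * Real.sqrt (2*α^2 + α) + 2*α + 1)/(1-2*α) = _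
    rw [show 2*α^2 + α = α * (1+2*α) by ring]
  clear_value cstar
  have hacs : (1-2*α) * cstar = 2*s + (1 + 2*α) := by
    rw [hcstar]; field_simp; ring
  have hc1 : 1 < cstar := by
    rw [hcstar, lt_div_iff₀ ha]
    nlinarith [hs0]
  have hquad : (1-2*α)*cstar^2 - 2*(1+2*α)*cstar + (1+2*α) = 0 := by
    rw [hcstar]; field_simp; linear_combination 4 * hsq
  have hden : ∀ c : ℝ, 1 < c →
      1 - α * (4 / (1 - 1/c) - 2) = ((1-2*α)*c - (1+2*α))/(c-1) := by
    intro c hc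
    have hc0 : c ≠ 0 := by positivity
    have hc1' : c - 1 ≠ 0 := by linarith
    have h1c : 1 - 1/c ≠ 0 := by
      rw [show 1 - 1/c = (c-1)/c by field_simp]
      exact div_ne_zero hc1' hc0
    field_simp
    ring
  have hh : ∀ c : ℝ, 1 < c → h c = 2*c*(c-1)/((1-2*α)*c - (1+2*α)) := by
    intro c hc
    show 2*c / _ = _
    rw [hden c hc, div_div_eq_mul_div]
  have hpos : (1-2*α)*cstar - (1+2*α) = 2*s := by linarith
  have hhc : h cstar = 2*cstar*(cstar-1)/(2*s) := by
    rw [hh cstar hc1, hpos]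
  refine ⟨⟨hc1, ?_⟩, ?_, ?_⟩
  · rw [hden cstar hc1]
    exact div_pos (by rw [hpos]; linarith) (by linarith)
  · intro c hcgt hcden
    have hcb : 0 < (1-2*α)*c - (1+2*α) := by
      rw [hden c hcgt] at hcden
      rcases div_pos_iff.mp hcden with ⟨h1, _⟩ | ⟨_, h2⟩
      · exact h1
      · linarith
    rw [hhc, hh c hcgt, div_le_div_iff₀ (by linarith) hcb]
    have key : 2*c*(c-1)*(2*s) - 2*cstar*(cstar-1)*((1-2*α)*c-(1+2*α))
        = 4*s*(c-cstar)^2 := by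
      linear_combination (2*c - 4*c*cstar + 2*cstar^2) * hacs + (2*c - 2*cstar) * hquad
    nlinarith [mul_nonneg hs0.le (sq_nonneg (c - cstar))]
  · rw [hhc, hcstar]
    rw [div_eq_div_iff (by positivity) (by positivity)]
    field_simp
    ring_nf
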